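/- Let 0 < ε < 1 and let g₀ > 0 be the unique positive real satisfying g₀·Q(g₀/√(2π)) = (1 − ε)·exp(−g₀²/(4π)). Then for every x ≥ g₀/√(2π): √(2π)·x ≤ exp(−x²/2)/Q(x) ≤ √(2π)·x/(1 − ε). -/

import Mathlib

open MeasureTheory Real Set Filter

lemma hint : Integrable (fun u : ℝ => rexp (-u^2/2)) := by
  have h := integrable_exp_neg_mul_sq (by norm_num : (0:ℝ) < 1/2)
  convert h using 2 with u
  ring_nf

lemma int_pos (x : ℝ) : 0 < ∫ u in Set.Ioi x, rexp (-u^2/2) := by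
  rw [setIntegral_pos_iff_support_of_nonneg_ae]
  · have : Function.support (fun u : ℝ => rexp (-u^2/2)) = Set.univ := by
      ext u; simp [Function.mem_support, (Real.exp_pos _).ne']
    rw [this]
    simpa using measure_Ioi_pos (volume : Measure ℝ) x
  · exact Filter.Eventually.of_forall fun u => (Real.exp_pos _).le
  · exact hint.integrableOn

lemma exp_tendsto : Tendsto (fun u : ℝ => rexp (-u^2/2)) atTop (nhds 0) := by
  apply Real.tendsto_exp_atBot.comp
  have h1 : Tendsto (fun u : ℝ => u^2/2) atTop atTop :=
    (tendsto_pow_atTop two_ne_zero).atTop_div_const (by norm_num)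
  have h2 : Tendsto (fun u : ℝ => -(u^2/2)) atTop atBot := tendsto_neg_atBot_iff.mpr h1
  simpa [neg_div] using h2

lemma deriv1 (u : ℝ) : HasDerivAt (fun u : ℝ => -rexp (-u^2/2)) (u * rexp (-u^2/2)) u := by
  have h : HasDerivAt (fun u : ℝ => -u^2/2) (-u) u := by
    have := ((hasDerivAt_pow 2 u).div_const 2).fun_neg
    simpa [neg_div] using this
  have := (h.exp).fun_neg
  exact this.congr_deriv (by ring)

lemma int_mul (x : ℝ) (hx : 0 < x) :
    ∫ u in Set.Ioi x, u * rexp (-u^2/2) = rexp (-x^2/2) := by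
  have h := integral_Ioi_of_hasDerivAt_of_nonneg' (a := x)
    (g := fun u : ℝ => -rexp (-u^2/2)) (g' := fun u => u * rexp (-u^2/2))
    (l := 0) (fun u _ => deriv1 u) ?_ ?_
  · simpa using h
  · intro u hu
    have : (0:ℝ) < u := hx.trans hu
    positivity
  · simpa using exp_tendsto.neg

lemma intOn_mul (x : ℝ) (hx : 0 < x) :
    IntegrableOn (fun u => u * rexp (-u^2/2)) (Set.Ioi x) := by
  apply integrableOn_Ioi_deriv_of_nonneg' (g := fun u : ℝ => -rexp (-u^2/2))
    (fun u _ => deriv1 u) ?_ (l := 0) (by simpa using exp_tendsto.neg)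
  intro u hu
  have : (0:ℝ) < u := hx.trans hu
  positivity

lemma deriv2 (u : ℝ) (hu : 0 < u) :
    HasDerivAt (fun u : ℝ => -(rexp (-u^2/2) * u⁻¹)) ((1 + u⁻¹^2) * rexp (-u^2/2)) u := by
  have h1 : HasDerivAt (fun u : ℝ => rexp (-u^2/2)) (-u * rexp (-u^2/2)) u := by
    simpa using (deriv1 u).fun_neg
  have h2 : HasDerivAt (fun u : ℝ => u⁻¹) (-(u^2)⁻¹) u := by
    simpa using hasDerivAt_inv hu.ne'
  have := (h1.fun_mul h2).fun_neg
  refine this.congr_deriv ?_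
  field_simp
  ring

lemma tendsto2 : Tendsto (fun u : ℝ => -(rexp (-u^2/2) * u⁻¹)) atTop (nhds 0) := by
  have := (exp_tendsto.mul tendsto_inv_atTop_zero).neg
  simpa using this

lemma int_inv (x : ℝ) (hx : 0 < x) :
    ∫ u in Set.Ioi x, (1 + u⁻¹^2) * rexp (-u^2/2) = rexp (-x^2/2) * x⁻¹ := by
  have h := integral_Ioi_of_hasDerivAt_of_nonneg (a := x)
    (g := fun u : ℝ => -(rexp (-u^2/2) * u⁻¹)) (g' := fun u => (1 + u⁻¹^2) * rexp (-u^2/2))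
    (l := 0) ?_ (fun u hu => deriv2 u (hx.trans hu)) ?_ tendsto2
  · rw [h]; ring
  · exact ContinuousAt.continuousWithinAt
      (((Continuous.continuousAt (by fun_prop : Continuous fun u : ℝ => rexp (-u^2/2))).mul
        (continuousAt_inv₀ hx.ne')).neg)
  · intro u hu
    positivity

lemma intOn_inv (x : ℝ) (hx : 0 < x) :
    IntegrableOn (fun u => (1 + u⁻¹^2) * rexp (-u^2/2)) (Set.Ioi x) := by
  apply integrableOn_Ioi_deriv_of_nonneg (g := fun u : ℝ => -(rexp (-u^2/2) * u⁻¹))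
    (ContinuousAt.continuousWithinAt
      (((Continuous.continuousAt (by fun_prop : Continuous fun u : ℝ => rexp (-u^2/2))).mul
        (continuousAt_inv₀ hx.ne')).neg))
    (fun u hu => deriv2 u (hx.trans hu)) ?_ (l := 0) tendsto2
  intro u hu
  positivity

-- Upper Mills bound
lemma mills_upper (x : ℝ) (hx : 0 < x) :
    ∫ u in Set.Ioi x, rexp (-u^2/2) ≤ rexp (-x^2/2) / x := by
  have h1 : ∫ u in Set.Ioi x, rexp (-u^2/2) ≤ ∫ u in Set.Ioi x, (u/x) * rexp (-u^2/2) := by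
    apply setIntegral_mono_on hint.integrableOn
    · have := (intOn_mul x hx).div_const x
      simpa [IntegrableOn, div_mul_eq_mul_div, mul_div_assoc] using this
    · exact measurableSet_Ioi
    · intro u hu
      have hu' : x ≤ u := le_of_lt hu
      have h2 : (1:ℝ) ≤ u / x := (one_le_div hx).2 hu'
      nlinarith [Real.exp_pos (-u^2/2)]
  calc ∫ u in Set.Ioi x, rexp (-u^2/2) ≤ ∫ u in Set.Ioi x, (u/x) * rexp (-u^2/2) := h1
    _ = (∫ u in Set.Ioi x, u * rexp (-u^2/2)) / x := by
        rw [← integral_div]; congr 1 with u; ring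
    _ = rexp (-x^2/2) / x := by rw [int_mul x hx]

-- Lower Mills bound
lemma mills_lower (x : ℝ) (hx : 0 < x) :
    x / (1 + x^2) * rexp (-x^2/2) ≤ ∫ u in Set.Ioi x, rexp (-u^2/2) := by
  have h1 : ∫ u in Set.Ioi x, x^2/(1+x^2) * ((1 + u⁻¹^2) * rexp (-u^2/2))
      ≤ ∫ u in Set.Ioi x, rexp (-u^2/2) := by
    apply setIntegral_mono_on ((intOn_inv x hx).const_mul _) hint.integrableOn measurableSet_Ioi
    intro u hu
    have hu0 : (0:ℝ) < u := hx.trans hu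
    have h2 : u⁻¹^2 ≤ x⁻¹^2 := by
      gcongr
      exact le_of_lt hu
    have h3 : x^2/(1+x^2) * (1 + u⁻¹^2) ≤ 1 := by
      rw [div_mul_eq_mul_div, div_le_one (by positivity)]
      have : x^2 * x⁻¹^2 = 1 := by field_simp
      nlinarith
    nlinarith [Real.exp_pos (-u^2/2), sq_nonneg u⁻¹, sq_nonneg x]
  have h4 : ∫ u in Set.Ioi x, x^2/(1+x^2) * ((1 + u⁻¹^2) * rexp (-u^2/2))
      = x / (1+x^2) * rexp (-x^2/2) := by
    rw [integral_const_mul, int_inv x hx]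
    field_simp
  linarith [h1, h4.symm.le]

/-- The standard Gaussian tail probability `Q x = (1/√(2π)) ∫ₓ^∞ exp(-u²/2) du`. -/
noncomputable def Q (x : ℝ) : ℝ :=
  (Real.sqrt (2 * π))⁻¹ * ∫ u in Set.Ioi x, Real.exp (-u^2/2)

lemma cont_tail : Continuous fun x : ℝ => ∫ u in Set.Ioi x, rexp (-u^2/2) := by
  have key : ∀ x : ℝ, ∫ u in Set.Ioi x, rexp (-u^2/2)
      = (∫ u : ℝ, rexp (-u^2/2)) - (∫ u in Set.Iic (0:ℝ), rexp (-u^2/2))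
        - ∫ u in (0:ℝ)..x, rexp (-u^2/2) := by
    intro x
    have h1 := intervalIntegral.integral_Iic_add_Ioi (b := x)
      hint.integrableOn hint.integrableOn
    have h2 := intervalIntegral.integral_Iic_sub_Iic (a := (0:ℝ)) (b := x)
      hint.integrableOn hint.integrableOn
    linarith
  simp only [key]
  exact continuous_const.sub (hint.continuous_primitive 0)

lemma Qcont : Continuous Q := continuous_const.mul cont_tail

lemma Qpos (x : ℝ) : 0 < Q x := by
  have hc : (0:ℝ) < Real.sqrt (2*π) := Real.sqrt_pos.2 (by positivity)
  exact mul_pos (inv_pos.2 hc) (int_pos x)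

theorem stmt_11 (ε g₀ : ℝ) (hε0 : 0 < ε) (hε1 : ε < 1) (hg₀ : 0 < g₀)
    (hg₀eq : g₀ * Q (g₀ / Real.sqrt (2*π)) = (1 - ε) * Real.exp (-g₀^2/(4*π)))
    (hg₀uniq : ∀ g' : ℝ, 0 < g' →
      g' * Q (g' / Real.sqrt (2*π)) = (1 - ε) * Real.exp (-g'^2/(4*π)) → g' = g₀) :
    ∀ x : ℝ, g₀ / Real.sqrt (2*π) ≤ x →
      Real.sqrt (2*π) * x ≤ Real.exp (-x^2/2) / Q x ∧
      Real.exp (-x^2/2) / Q x ≤ Real.sqrt (2*π) * x / (1 - ε) := by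
  set c := Real.sqrt (2*π) with hc_def
  have hπ : (0:ℝ) < π := Real.pi_pos
  have hc : (0:ℝ) < c := Real.sqrt_pos.2 (by positivity)
  have hc2 : c^2 = 2*π := Real.sq_sqrt (by positivity)
  intro x hx
  have hx0 : 0 < x := lt_of_lt_of_le (by positivity) hx
  have hQx := Qpos x
  -- lower bound on ratio
  have hcQ : ∀ z : ℝ, c * Q z = ∫ u in Set.Ioi z, rexp (-u^2/2) := by
    intro z
    rw [Q, ← mul_assoc, mul_inv_cancel₀ hc.ne', one_mul]
  have hup : c * x * Q x ≤ rexp (-x^2/2) := by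
    have := mills_upper x hx0
    calc c * x * Q x = x * (c * Q x) := by ring
      _ ≤ x * (rexp (-x^2/2) / x) := by
          rw [hcQ x]; exact mul_le_mul_of_nonneg_left this hx0.le
      _ = rexp (-x^2/2) := by field_simp
  constructor
  · rw [le_div_iff₀ hQx]; exact hup
  -- upper bound on ratio
  have key : (1 - ε) * rexp (-x^2/2) ≤ c * x * Q x := by
    -- the function f
    set f : ℝ → ℝ := fun g => g * Q (g/c) - (1-ε) * rexp (-g^2/(4*π)) with hf_def
    have hfcont : Continuous f := by
      apply Continuous.sub
      · exact continuous_id.mul (Qcont.comp (continuous_id.div_const c))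
      · exact continuous_const.mul (Real.continuous_exp.comp (by fun_prop))
    have hfg₀ : f g₀ = 0 := by simp [hf_def, hg₀eq]
    -- value of f at c*y for y > 0
    have hfcy : ∀ y : ℝ, -(c*y)^2/(4*π) = -y^2/2 := by
      intro y
      rw [mul_pow, hc2]
      field_simp
      ring
    have h1ε : (0:ℝ) < 1 - ε := by linarith
    -- positivity of f at large points
    have hbig : ∀ y : ℝ, Real.sqrt ((1-ε)/ε) < y → 0 < f (c*y) := by
      intro y hy
      have hy0 : 0 < y := lt_of_le_of_lt (Real.sqrt_nonneg _) hy
      have hnn : (0:ℝ) ≤ (1-ε)/ε := div_nonneg h1ε.le hε0.le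
      have hy2 : (1-ε)/ε < y^2 := by
        nlinarith [Real.sq_sqrt hnn, Real.sqrt_nonneg ((1-ε)/ε)]
      have hεy : 1 - ε < ε * y^2 := by
        rw [div_lt_iff₀ hε0] at hy2; linarith
      have hQy : y/(1+y^2) * rexp (-y^2/2) ≤ c * Q y := by
        rw [hcQ y]; exact mills_lower y hy0
      have hfval : f (c*y) = y * (c * Q y) - (1-ε) * rexp (-y^2/2) := by
        simp only [hf_def]
        rw [hfcy y, mul_div_cancel_left₀ _ hc.ne']
        ring
      rw [hfval]
      have h5 : (1-ε) * (1+y^2) < y^2 := by nlinarith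
      have hexp := Real.exp_pos (-y^2/2)
      have h6 : (1-ε) * rexp (-y^2/2) < y * (y/(1+y^2) * rexp (-y^2/2)) := by
        rw [show y * (y/(1+y^2) * rexp (-y^2/2)) = y^2 * rexp (-y^2/2) / (1+y^2) by ring,
          lt_div_iff₀ (by positivity : (0:ℝ) < 1+y^2)]
        nlinarith
      have h7 : y * (y/(1+y^2) * rexp (-y^2/2)) ≤ y * (c * Q y) :=
        mul_le_mul_of_nonneg_left hQy hy0.le
      linarith
    -- main argument by contradiction
    by_contra hcon
    push_neg at hcon
    have hfx : f (c*x) < 0 := by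
      have hfval : f (c*x) = c * x * Q x - (1-ε) * rexp (-x^2/2) := by
        simp only [hf_def]
        rw [hfcy x, mul_div_cancel_left₀ _ hc.ne']
      rw [hfval]; linarith
    have hgx : g₀ ≤ c * x := by
      rw [div_le_iff₀ hc] at hx; linarith [hx]
    have hgx' : g₀ < c * x := by
      rcases lt_or_eq_of_le hgx with h | h
      · exact h
      · exfalso; rw [← h] at hfx; rw [hfg₀] at hfx; exact lt_irrefl 0 hfx
    set Y : ℝ := max x (Real.sqrt ((1-ε)/ε) + 1) with hY_def
    have hYx : x ≤ Y := le_max_left _ _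
    have hYbig : Real.sqrt ((1-ε)/ε) < Y :=
      lt_of_lt_of_le (lt_add_one _) (le_max_right _ _)
    have hfY : 0 < f (c*Y) := hbig Y hYbig
    have hle : c * x ≤ c * Y := mul_le_mul_of_nonneg_left hYx hc.le
    have hmem : (0:ℝ) ∈ Set.Icc (f (c*x)) (f (c*Y)) := ⟨hfx.le, hfY.le⟩
    obtain ⟨g', hg'mem, hg'eq⟩ := intermediate_value_Icc hle hfcont.continuousOn hmem
    have hg'pos : 0 < g' := lt_of_lt_of_le (by positivity) hg'mem.1
    have hg'eq2 : g' * Q (g'/c) = (1-ε) * rexp (-g'^2/(4*π)) := by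
      have : f g' = 0 := hg'eq
      simp only [hf_def] at this
      linarith
    have := hg₀uniq g' hg'pos hg'eq2
    have : g₀ < g₀ := lt_of_lt_of_le hgx' (this ▸ hg'mem.1)
    exact lt_irrefl _ this
  rw [div_le_div_iff₀ hQx (by linarith : (0:ℝ) < 1 - ε)]
  calc rexp (-x^2/2) * (1-ε) = (1-ε) * rexp (-x^2/2) := by ring
    _ ≤ c * x * Q x := key
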